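/- Let M ≥ 1 and T ≥ 1 be integers, ρ > 0, α = ρ/(1 + ρ), and 𝒳 a nonempty set. For each t ∈ {1,…,T} let f_t : 𝒳 → [0,1] and g̃_t : 𝒳 → [-1,1]^M, and suppose there exists a sequence x°_1, …, x°_T ∈ 𝒳 with g̃_{t,i}(x°_t) ≤ −ρ for every t and every coordinate i. Let (z_1, …, z_T) ∈ 𝒳^T be an arbitrary sequence, let λ_t ∈ ℝ^M with λ_t ≥ 0 componentwise, let τ ∈ {1,…,T}, and suppose that for every t ≤ τ the action x_t ∈ 𝒳 satisfies f_t(x_t) − ⟨λ_t, g̃_t(x_t)⟩ ≥ f_t(x) − ⟨λ_t, g̃_t(x)⟩ for all x ∈ 𝒳. Then α·∑_{t=1}^{T} f_t(z_t) − ∑_{t=1}^{τ} f_t(x_t) ≤ (T − τ) − ∑_{t=1}^{τ} ⟨λ_t, g̃_t(x_t)⟩. -/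

import Mathlib

open Finset

/-- α-regret decomposition in the adversarial setting
(Inequalities (exp)–(optA) in the proof of Theorem `adv_reg`). -/
theorem alpha_regret_decomposition
    (M T : ℕ) (hM : 1 ≤ M) (hT : 1 ≤ T)
    (ρ α : ℝ) (hρ : 0 < ρ) (hα : α = ρ / (1 + ρ))
    {𝒳 : Type*} [Nonempty 𝒳]
    (f : ℕ → 𝒳 → ℝ) (g : ℕ → 𝒳 → Fin M → ℝ)
    (hf : ∀ t ∈ Finset.Icc 1 T, ∀ x, f t x ∈ Set.Icc (0 : ℝ) 1)
    (hg : ∀ t ∈ Finset.Icc 1 T, ∀ x i, g t x i ∈ Set.Icc (-1 : ℝ) 1)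
    (x0 : ℕ → 𝒳)
    (hx0 : ∀ t ∈ Finset.Icc 1 T, ∀ i, g t (x0 t) i ≤ -ρ)
    (z : ℕ → 𝒳)
    (lam : ℕ → Fin M → ℝ) (hlam : ∀ t, ∀ i, 0 ≤ lam t i)
    (τ : ℕ) (hτ : τ ∈ Finset.Icc 1 T)
    (x : ℕ → 𝒳)
    (hgreedy : ∀ t ∈ Finset.Icc 1 τ, ∀ y : 𝒳,
      f t y - ∑ i, lam t i * g t y i ≤ f t (x t) - ∑ i, lam t i * g t (x t) i) :
    α * ∑ t ∈ Finset.Icc 1 T, f t (z t) - ∑ t ∈ Finset.Icc 1 τ, f t (x t) ≤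
      ((T : ℝ) - τ) - ∑ t ∈ Finset.Icc 1 τ, ∑ i, lam t i * g t (x t) i := by
  obtain ⟨hτ1, hτT⟩ := Finset.mem_Icc.mp hτ
  have hρ1 : (0:ℝ) < 1 + ρ := by linarith
  have hα0 : 0 < α := by rw [hα]; positivity
  have hα1 : α < 1 := by rw [hα, div_lt_one hρ1]; linarith
  have hkey : α = (1 - α) * ρ := by
    rw [hα]; field_simp; ring
  -- per-round inequality for t ≤ τ
  have hstep : ∀ t ∈ Finset.Icc 1 τ,
      α * f t (z t) ≤ f t (x t) - ∑ i, lam t i * g t (x t) i := by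
    intro t ht
    obtain ⟨ht1, htτ⟩ := Finset.mem_Icc.mp ht
    have htT : t ∈ Finset.Icc 1 T := Finset.mem_Icc.mpr ⟨ht1, le_trans htτ hτT⟩
    have h1 := hgreedy t ht (z t)
    have h2 := hgreedy t ht (x0 t)
    have hS : ∑ i, lam t i * (α * g t (z t) i + (1 - α) * g t (x0 t) i) ≤ 0 := by
      apply Finset.sum_nonpos
      intro i _
      have hbr : α * g t (z t) i + (1 - α) * g t (x0 t) i ≤ 0 := by
        have h3 : g t (z t) i ≤ 1 := (hg t htT (z t) i).2
        have h4 : g t (x0 t) i ≤ -ρ := hx0 t htT i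
        nlinarith [hα0.le, hα1.le]
      exact mul_nonpos_of_nonneg_of_nonpos (hlam t i) hbr
    have hsumeq : ∑ i, lam t i * (α * g t (z t) i + (1 - α) * g t (x0 t) i)
        = α * ∑ i, lam t i * g t (z t) i + (1 - α) * ∑ i, lam t i * g t (x0 t) i := by
      rw [Finset.mul_sum, Finset.mul_sum, ← Finset.sum_add_distrib]
      exact Finset.sum_congr rfl fun i _ => by ring
    have hf0 : 0 ≤ f t (x0 t) := (hf t htT (x0 t)).1
    nlinarith [mul_le_mul_of_nonneg_left h1 hα0.le,
      mul_le_mul_of_nonneg_left h2 (by linarith : (0:ℝ) ≤ 1 - α)]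
  -- split the big sum
  have hsplit : ∑ t ∈ Finset.Icc 1 T, f t (z t)
      = ∑ t ∈ Finset.Icc 1 τ, f t (z t) + ∑ t ∈ Finset.Ioc τ T, f t (z t) := by
    rw [show Finset.Icc 1 T = Finset.Ioc 0 T from (Finset.Icc_add_one_left_eq_Ioc 0 T),
        show Finset.Icc 1 τ = Finset.Ioc 0 τ from (Finset.Icc_add_one_left_eq_Ioc 0 τ)]
    exact (Finset.sum_Ioc_consecutive _ (Nat.zero_le τ) hτT).symm
  -- head bound
  have hhead : ∑ t ∈ Finset.Icc 1 τ, α * f t (z t)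
      ≤ ∑ t ∈ Finset.Icc 1 τ, (f t (x t) - ∑ i, lam t i * g t (x t) i) :=
    Finset.sum_le_sum hstep
  -- tail bound
  have htail : ∑ t ∈ Finset.Ioc τ T, α * f t (z t) ≤ (T : ℝ) - τ := by
    have hbd : ∀ t ∈ Finset.Ioc τ T, α * f t (z t) ≤ 1 := by
      intro t ht
      obtain ⟨ht1, ht2⟩ := Finset.mem_Ioc.mp ht
      have htT : t ∈ Finset.Icc 1 T := Finset.mem_Icc.mpr ⟨le_trans hτ1 ht1.le, ht2⟩
      have h0 := (hf t htT (z t)).1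
      have h1 := (hf t htT (z t)).2
      nlinarith
    calc ∑ t ∈ Finset.Ioc τ T, α * f t (z t)
        ≤ ∑ _t ∈ Finset.Ioc τ T, (1:ℝ) := Finset.sum_le_sum hbd
      _ = ((Finset.Ioc τ T).card : ℝ) := by simp
      _ = (T : ℝ) - τ := by
          rw [Nat.card_Ioc, Nat.cast_sub hτT]
  have hsub : ∑ t ∈ Finset.Icc 1 τ, (f t (x t) - ∑ i, lam t i * g t (x t) i)
      = ∑ t ∈ Finset.Icc 1 τ, f t (x t) - ∑ t ∈ Finset.Icc 1 τ, ∑ i, lam t i * g t (x t) i :=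
    Finset.sum_sub_distrib _ _
  have hmul : α * ∑ t ∈ Finset.Icc 1 T, f t (z t)
      = ∑ t ∈ Finset.Icc 1 τ, α * f t (z t) + ∑ t ∈ Finset.Ioc τ T, α * f t (z t) := by
    rw [hsplit, mul_add, Finset.mul_sum, Finset.mul_sum]
  linarith
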